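/- Let N ≥ 1 be an integer and let m, p, σ be real numbers with max(N−2,0)/N < m < 1, p > 1 and σ > σ* := 2(p−1)/(1−m). Let (x,y,z) be a solution of the system (S) on an interval I with x(η) ≥ 0 and z(η) ≥ 0 for all η ∈ I, and suppose there exist η₁ < η₂ in I with y(η₁) > −(σ+2)/(p−m) and y(η₂) < −(σ+2)/(p−m). Then y(η) < −(σ+2)/(p−m) for every η ∈ I with η > η₂ (the plane y = −(σ+2)/(p−m) is a no-return plane in the decreasing y-direction). -/

import Mathlib

open Set Filter Topology

/-- One-sided derivative sign at a left endpoint of a local maximum. -/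
private lemma aux_right {f : ℝ → ℝ} {d a b : ℝ} (hab : a < b)
    (hf : HasDerivWithinAt f d (Set.Icc a b) a)
    (hle : ∀ t ∈ Set.Ioc a b, f t ≤ f a) : d ≤ 0 := by
  have h := hf.mono (Set.Ioc_subset_Icc_self : Set.Ioc a b ⊆ Set.Icc a b)
  rw [hasDerivWithinAt_iff_tendsto_slope] at h
  have hs : Set.Ioc a b \ {a} = Set.Ioc a b := by
    apply Set.diff_singleton_eq_self
    simp
  rw [hs] at h
  have hne : (𝓝[Set.Ioc a b] a).NeBot := by
    rw [nhdsWithin_Ioc_eq_nhdsGT hab]; infer_instance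
  refine le_of_tendsto h ?_
  filter_upwards [self_mem_nhdsWithin] with t ht
  rw [slope_def_field]
  have h1 : f t ≤ f a := hle t ht
  have h2 : a < t := ht.1
  exact div_nonpos_of_nonpos_of_nonneg (by linarith) (by linarith)

/-- One-sided derivative sign at a right endpoint. -/
private lemma aux_left {f : ℝ → ℝ} {d a b : ℝ} (hab : a < b)
    (hf : HasDerivWithinAt f d (Set.Icc a b) b)
    (hle : ∀ t ∈ Set.Ico a b, f t ≤ f b) : 0 ≤ d := by
  have h := hf.mono (Set.Ico_subset_Icc_self : Set.Ico a b ⊆ Set.Icc a b)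
  rw [hasDerivWithinAt_iff_tendsto_slope] at h
  have hs : Set.Ico a b \ {b} = Set.Ico a b := by
    apply Set.diff_singleton_eq_self
    simp
  rw [hs] at h
  have hne : (𝓝[Set.Ico a b] b).NeBot := by
    rw [nhdsWithin_Ico_eq_nhdsLT hab]; infer_instance
  refine ge_of_tendsto h ?_
  filter_upwards [self_mem_nhdsWithin] with t ht
  rw [slope_def_field]
  have h1 : f t ≤ f b := hle t ht
  have h2 : t < b := ht.2
  exact div_nonneg_iff.mpr (Or.inr ⟨by linarith, by linarith⟩)

private lemma aux_anti (f g : ℝ → ℝ) (a b : ℝ)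
    (hf : ∀ t ∈ Set.Icc a b, HasDerivWithinAt f (g t) (Set.Icc a b) t)
    (hg : ∀ t ∈ Set.Ioo a b, g t ≤ 0) : AntitoneOn f (Set.Icc a b) := by
  apply antitoneOn_of_deriv_nonpos (convex_Icc a b)
  · exact fun t ht => (hf t ht).continuousWithinAt
  · intro t ht; rw [interior_Icc] at ht
    exact (((hf t (Set.Ioo_subset_Icc_self ht)).hasDerivAt
      (Icc_mem_nhds ht.1 ht.2)).differentiableAt).differentiableWithinAt
  · intro t ht; rw [interior_Icc] at ht
    rw [((hf t (Set.Ioo_subset_Icc_self ht)).hasDerivAt (Icc_mem_nhds ht.1 ht.2)).deriv]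
    exact hg t ht

set_option maxHeartbeats 1000000 in
/-- The plane y = -(σ+2)/(p-m) is a no-return plane in the decreasing
y-direction for trajectories of (S) with nonnegative x and z coordinates. -/
theorem stmt12 (N : ℕ) (hN : 1 ≤ N) (m p σ : ℝ)
    (hm1 : max ((N : ℝ) - 2) 0 / N < m) (hm2 : m < 1) (hp : 1 < p)
    (hσ : 2 * (p - 1) / (1 - m) < σ)
    (I : Set ℝ) (hI : I.OrdConnected)
    (x y z : ℝ → ℝ)
    (hx : ∀ η ∈ I, HasDerivWithinAt x (x η * (2 + (1 - m) * y η)) I η)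
    (hy : ∀ η ∈ I, HasDerivWithinAt y (-(x η) - ((N : ℝ) - 2) * y η + z η
      - m * (y η) ^ 2 - (p - m) / (σ + 2) * x η * y η) I η)
    (hz : ∀ η ∈ I, HasDerivWithinAt z (z η * (σ + 2 + (p - m) * y η)) I η)
    (hxpos : ∀ η ∈ I, 0 ≤ x η) (hzpos : ∀ η ∈ I, 0 ≤ z η)
    (η₁ η₂ : ℝ) (hη₁ : η₁ ∈ I) (hη₂ : η₂ ∈ I) (h12 : η₁ < η₂)
    (hy1 : -((σ + 2) / (p - m)) < y η₁) (hy2 : y η₂ < -((σ + 2) / (p - m))) :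
    ∀ η ∈ I, η₂ < η → y η < -((σ + 2) / (p - m)) := by
  -- basic arithmetic facts
  have hN0 : (0:ℝ) < N := by exact_mod_cast hN
  have hm0 : 0 < m :=
    lt_of_le_of_lt (div_nonneg (le_max_right _ _) hN0.le) hm1
  have hpm : 0 < p - m := by linarith
  have h1m : 0 < 1 - m := by linarith
  have hσ2 : 0 < σ + 2 := by
    have h0 : 0 < 2 * (p - 1) / (1 - m) := div_pos (by linarith) h1m
    linarith
  have hσpm : 2 * (p - m) < (σ + 2) * (1 - m) := by
    have h := (div_lt_iff₀ h1m).mp hσ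
    nlinarith
  have hNm : (N : ℝ) - 2 < N * m := by
    have h := (div_lt_iff₀ hN0).mp hm1
    have := le_max_left ((N : ℝ) - 2) 0
    nlinarith
  have hkey : ((N:ℝ) - 2) * (p - m) < m * (σ + 2) := by
    rcases le_or_gt ((N:ℝ) - 2) 0 with h | h
    · nlinarith
    · have hA : ((N:ℝ) - 2) * (1 - m) < 2 * m := by nlinarith
      nlinarith [mul_lt_mul_of_pos_right hA hpm, mul_lt_mul_of_pos_left hσpm hm0]
  set c : ℝ := -((σ + 2) / (p - m)) with hc
  set K : ℝ := -(((N:ℝ) - 2) * c) - m * c ^ 2 with hK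
  have hcpm : (p - m) * c = -(σ + 2) := by
    rw [hc]; field_simp [hpm.ne', hσ2.ne']
  have hKneg : K < 0 := by
    have hKB : K * (p - m) ^ 2 = (σ + 2) * (((N:ℝ) - 2) * (p - m) - m * (σ + 2)) := by
      rw [hK, hc]; field_simp [hpm.ne', hσ2.ne']
    nlinarith [sq_nonneg (p - m), mul_pos hpm hpm]
  -- continuity of y on I
  have hycont : ContinuousOn y I := fun t ht => (hy t ht).continuousWithinAt
  -- reformulated derivative of y on the plane y = c
  have hval : ∀ t ∈ I, y t = c → HasDerivWithinAt y (z t + K) I t := by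
    intro t ht hyt
    have h := hy t ht
    have heq : -(x t) - ((N : ℝ) - 2) * y t + z t
        - m * (y t) ^ 2 - (p - m) / (σ + 2) * x t * y t = z t + K := by
      rw [hyt, hK, hc]; field_simp [hpm.ne', hσ2.ne']; ring
    rwa [heq] at h
  intro η' hη'I hη'gt
  by_contra hcon
  push_neg at hcon
  -- last crossing before η₂
  have hIcc1 : Set.Icc η₁ η₂ ⊆ I := hI.out hη₁ hη₂
  have hTclosed : IsClosed (Set.Icc η₁ η₂ ∩ y ⁻¹' {c}) :=
    (hycont.mono hIcc1).preimage_isClosed_of_isClosed isClosed_Icc isClosed_singleton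
  have hTcomp : IsCompact (Set.Icc η₁ η₂ ∩ y ⁻¹' {c}) :=
    isCompact_Icc.of_isClosed_subset hTclosed Set.inter_subset_left
  have hTne : (Set.Icc η₁ η₂ ∩ y ⁻¹' {c}).Nonempty := by
    obtain ⟨t, ht, hyt⟩ := intermediate_value_Icc' h12.le (hycont.mono hIcc1) ⟨hy2.le, hy1.le⟩
    exact ⟨t, ht, hyt⟩
  set η₀ := sSup (Set.Icc η₁ η₂ ∩ y ⁻¹' {c}) with hη₀def
  have hη₀T : η₀ ∈ Set.Icc η₁ η₂ ∩ y ⁻¹' {c} := hTcomp.sSup_mem hTne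
  have hη₀mem : η₀ ∈ Set.Icc η₁ η₂ := hη₀T.1
  have hyη₀ : y η₀ = c := hη₀T.2
  have hη₀I : η₀ ∈ I := hIcc1 hη₀mem
  have hη₀2 : η₀ < η₂ := by
    rcases lt_or_eq_of_le hη₀mem.2 with h | h
    · exact h
    · rw [h] at hyη₀; linarith
  have hyltA : ∀ t ∈ Set.Ioc η₀ η₂, y t < c := by
    intro t ht
    by_contra hge
    push_neg at hge
    have htI : Set.Icc t η₂ ⊆ I := hI.out (hIcc1 ⟨hη₀mem.1.trans ht.1.le, ht.2⟩) hη₂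
    obtain ⟨s, hs, hys⟩ := intermediate_value_Icc' ht.2 (hycont.mono htI) ⟨hy2.le, hge⟩
    have hsT : s ∈ Set.Icc η₁ η₂ ∩ y ⁻¹' {c} :=
      ⟨⟨hη₀mem.1.trans (ht.1.le.trans hs.1), hs.2⟩, hys⟩
    have : s ≤ η₀ := le_csSup hTcomp.bddAbove hsT
    have : η₀ < s := lt_of_lt_of_le ht.1 hs.1
    linarith
  -- first return after η₂
  have hIcc2 : Set.Icc η₂ η' ⊆ I := hI.out hη₂ hη'I
  have hT'closed : IsClosed (Set.Icc η₂ η' ∩ y ⁻¹' Set.Ici c) :=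
    (hycont.mono hIcc2).preimage_isClosed_of_isClosed isClosed_Icc isClosed_Ici
  have hT'comp : IsCompact (Set.Icc η₂ η' ∩ y ⁻¹' Set.Ici c) :=
    isCompact_Icc.of_isClosed_subset hT'closed Set.inter_subset_left
  have hT'ne : (Set.Icc η₂ η' ∩ y ⁻¹' Set.Ici c).Nonempty :=
    ⟨η', ⟨⟨hη'gt.le, le_rfl⟩, hcon⟩⟩
  set η₃ := sInf (Set.Icc η₂ η' ∩ y ⁻¹' Set.Ici c) with hη₃def
  have hη₃T : η₃ ∈ Set.Icc η₂ η' ∩ y ⁻¹' Set.Ici c := hT'comp.sInf_mem hT'ne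
  have hη₃I : η₃ ∈ I := hIcc2 hη₃T.1
  have hη₂3 : η₂ < η₃ := by
    rcases lt_or_eq_of_le hη₃T.1.1 with h | h
    · exact h
    · exfalso; have := hη₃T.2; rw [← h] at this; exact absurd this (not_le.mpr hy2)
  have hyltB : ∀ t ∈ Set.Ico η₂ η₃, y t < c := by
    intro t ht
    by_contra hge
    push_neg at hge
    have htT : t ∈ Set.Icc η₂ η' ∩ y ⁻¹' Set.Ici c :=
      ⟨⟨ht.1, ht.2.le.trans hη₃T.1.2⟩, hge⟩
    have : η₃ ≤ t := csInf_le hT'comp.bddBelow htT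
    linarith [ht.2]
  have hyη₃ : y η₃ = c := by
    refine le_antisymm ?_ hη₃T.2
    have hsub : Set.Ico η₂ η₃ ⊆ I := fun t ht =>
      hIcc2 ⟨ht.1, ht.2.le.trans hη₃T.1.2⟩
    have hcw : Tendsto y (𝓝[Set.Ico η₂ η₃] η₃) (𝓝 (y η₃)) :=
      ((hy η₃ hη₃I).continuousWithinAt).mono hsub
    have hne : (𝓝[Set.Ico η₂ η₃] η₃).NeBot := by
      rw [nhdsWithin_Ico_eq_nhdsLT hη₂3]; infer_instance
    refine le_of_tendsto hcw ?_
    filter_upwards [self_mem_nhdsWithin] with t ht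
    exact (hyltB t ht).le
  have hη₀3 : η₀ < η₃ := hη₀2.trans hη₂3
  have hIcc03 : Set.Icc η₀ η₃ ⊆ I := hI.out hη₀I hη₃I
  have hyle : ∀ t ∈ Set.Icc η₀ η₃, y t ≤ c := by
    intro t ht
    rcases eq_or_lt_of_le ht.1 with h | h
    · rw [← h]; exact hyη₀.le
    rcases le_or_gt t η₂ with h2 | h2
    · exact (hyltA t ⟨h, h2⟩).le
    rcases eq_or_lt_of_le ht.2 with h3 | h3
    · rw [h3]; exact hyη₃.le
    · exact (hyltB t ⟨h2.le, h3⟩).le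
  -- one-sided derivative estimates
  have hzB : z η₀ + K ≤ 0 := by
    refine aux_right hη₀2 (((hval η₀ hη₀I hyη₀)).mono (hI.out hη₀I hη₂)) ?_
    intro t ht
    rw [hyη₀]
    exact (hyltA t ht).le
  have hzD : 0 ≤ z η₃ + K := by
    refine aux_left hη₂3 (((hval η₃ hη₃I hyη₃)).mono (hI.out hη₂ hη₃I)) ?_
    intro t ht
    rw [hyη₃]
    exact (hyltB t ht).le
  -- z is nonincreasing on [η₀, η₃]
  have hanti : AntitoneOn z (Set.Icc η₀ η₃) := by
    refine aux_anti z (fun t => z t * (σ + 2 + (p - m) * y t)) η₀ η₃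
      (fun t ht => (hz t (hIcc03 ht)).mono hIcc03) ?_
    intro t ht
    have h1 : 0 ≤ z t := hzpos t (hIcc03 (Set.Ioo_subset_Icc_self ht))
    have h2 : y t ≤ c := hyle t (Set.Ioo_subset_Icc_self ht)
    have h3 : σ + 2 + (p - m) * y t ≤ 0 := by
      have := mul_le_mul_of_nonneg_left h2 hpm.le
      linarith [hcpm]
    exact mul_nonpos_of_nonneg_of_nonpos h1 h3
  have hmem0 : η₀ ∈ Set.Icc η₀ η₃ := Set.left_mem_Icc.mpr hη₀3.le
  have hmem3 : η₃ ∈ Set.Icc η₀ η₃ := Set.right_mem_Icc.mpr hη₀3.le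
  have h30 : z η₃ ≤ z η₀ := hanti hmem0 hmem3 hη₀3.le
  -- z is constant equal to -K on [η₀, η₃]
  have hzconst : ∀ t ∈ Set.Icc η₀ η₃, z t = -K := by
    intro t ht
    have h1 : z t ≤ z η₀ := hanti hmem0 ht ht.1
    have h2 : z η₃ ≤ z t := hanti ht hmem3 ht.2
    linarith
  -- contradiction via uniqueness of the derivative at η₂
  have hη₂mem : η₂ ∈ Set.Icc η₀ η₃ := ⟨hη₀2.le, hη₂3.le⟩
  have hud : UniqueDiffWithinAt ℝ (Set.Icc η₀ η₃) η₂ := (uniqueDiffOn_Icc hη₀3) η₂ hη₂mem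
  have hd1 : HasDerivWithinAt z (z η₂ * (σ + 2 + (p - m) * y η₂)) (Set.Icc η₀ η₃) η₂ :=
    (hz η₂ hη₂).mono hIcc03
  have hd2 : HasDerivWithinAt z 0 (Set.Icc η₀ η₃) η₂ :=
    (hasDerivWithinAt_const η₂ _ (-K)).congr (fun t ht => hzconst t ht) (hzconst η₂ hη₂mem)
  have heq0 : z η₂ * (σ + 2 + (p - m) * y η₂) = 0 := by
    rw [← hd1.derivWithin hud, hd2.derivWithin hud]
  have hz2 : z η₂ = -K := hzconst η₂ hη₂mem
  have hfac : σ + 2 + (p - m) * y η₂ < 0 := by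
    have := mul_lt_mul_of_pos_left hy2 hpm
    linarith [hcpm]
  rw [hz2] at heq0
  nlinarith
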